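/- arXiv:1209.5092 — 3 statements merged into one kernel-verified Lean document; each statement's English description precedes it below -/
import Mathlib

section
/- Let H be a self-adjoint operator bounded below on a Hilbert space, with lowest eigenvalue E₀(H) and E₁(H) the second point of the spectrum (counted with multiplicity, or the bottom of the essential spectrum). Let ψ be a unit vector in the domain of H with ⟨ψ, Hψ⟩ < E₁(H). Then E₀(H) ≥ ⟨ψ, Hψ⟩ - (⟨Hψ, Hψ⟩ - ⟨ψ, Hψ⟩²)/(E₁(H) - ⟨ψ, Hψ⟩). -/
set_option maxHeartbeats 1000000


open scoped InnerProductSpace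

/-- The second min-max (Courant–Fischer) value of a bounded self-adjoint operator. -/
noncomputable def secondMinMax {E : Type*} [NormedAddCommGroup E] [InnerProductSpace ℝ E]
    (H : E →L[ℝ] E) : ℝ :=
  ⨆ v : E, ⨅ ψ : {ψ : E // ‖ψ‖ = 1 ∧ ⟪ψ, v⟫_ℝ = 0}, ⟪(ψ : E), H ψ⟫_ℝ


section TempleAux

variable {E : Type*} [NormedAddCommGroup E] [InnerProductSpace ℝ E] [CompleteSpace E]

omit [CompleteSpace E] in
lemma aux_unit_bddBelow (T : E →L[ℝ] E) (h : IsUnit T) :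
    ∃ c > 0, ∀ x, ‖x‖ ≤ c * ‖T x‖ := by
  obtain ⟨u, hu⟩ := h
  refine ⟨‖(↑u⁻¹ : E →L[ℝ] E)‖ + 1, by positivity, fun x => ?_⟩
  have key : (↑u⁻¹ : E →L[ℝ] E) (T x) = x := by
    calc (↑u⁻¹ : E →L[ℝ] E) (T x) = ((↑u⁻¹ * ↑u : E →L[ℝ] E)) x := by rw [hu]; rfl
    _ = x := by rw [u.inv_mul]; rfl
  calc ‖x‖ = ‖(↑u⁻¹ : E →L[ℝ] E) (T x)‖ := by rw [key]
  _ ≤ ‖(↑u⁻¹ : E →L[ℝ] E)‖ * ‖T x‖ := ContinuousLinearMap.le_opNorm _ _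
  _ ≤ (‖(↑u⁻¹ : E →L[ℝ] E)‖ + 1) * ‖T x‖ := by
      nlinarith [norm_nonneg (T x)]

lemma aux_bddBelow_unit (T : E →L[ℝ] E) (hT : IsSelfAdjoint T) {d : ℝ} (hd : 0 < d)
    (h : ∀ x, d * ‖x‖ ≤ ‖T x‖) : IsUnit T := by
  have hker : ∀ x : E, T x = 0 → x = 0 := by
    intro x hx
    have h1 := h x
    rw [hx, norm_zero] at h1
    have : ‖x‖ = 0 := le_antisymm (by nlinarith) (norm_nonneg x)
    exact norm_eq_zero.mp this
  have hinj : LinearMap.ker (T : E →ₗ[ℝ] E) = ⊥ := (LinearMap.ker_eq_bot' (f := (T : E →ₗ[ℝ] E))).mpr hker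
  have hanti : AntilipschitzWith (⟨d, hd.le⟩ : NNReal)⁻¹ T := by
    refine AntilipschitzWith.of_le_mul_dist fun x y => ?_
    simp only [dist_eq_norm, ← map_sub]
    have h1 := h (x - y)
    have : ‖x - y‖ ≤ d⁻¹ * ‖T (x - y)‖ := by
      rw [le_inv_mul_iff₀ hd]; exact h1
    exact this
  have hclosed : IsClosed (Set.range T) := hanti.isClosed_range T.uniformContinuous
  have hrange : LinearMap.range (T : E →ₗ[ℝ] E) = ⊤ := by
    have hcl : IsClosed (LinearMap.range (T : E →ₗ[ℝ] E) : Set E) := by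
      rw [LinearMap.coe_range]
      simpa using hclosed
    haveI : CompleteSpace (LinearMap.range (T : E →ₗ[ℝ] E)) := hcl.completeSpace_coe
    rw [← Submodule.orthogonal_eq_bot_iff, Submodule.eq_bot_iff]
    intro y hy
    have h1 : ⟪T (T y), y⟫_ℝ = 0 := hy (T (T y)) ⟨T y, rfl⟩
    have h3 : ⟪T (T y), y⟫_ℝ = ⟪T y, T y⟫_ℝ := hT.isSymmetric (T y) y
    have h2 : ⟪T y, T y⟫_ℝ = 0 := by rw [← h3]; exact h1
    have hTy : T y = 0 := inner_self_eq_zero.mp h2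
    exact hker y hTy
  let e := ContinuousLinearEquiv.ofBijective T hinj hrange
  exact ⟨⟨T, e.symm, by ext x; exact e.apply_symm_apply x, by ext x; exact e.symm_apply_apply x⟩, rfl⟩

lemma aux_sa_smul_one (r : ℝ) : IsSelfAdjoint (r • (1 : E →L[ℝ] E)) := by
  rw [IsSelfAdjoint, star_smul, star_one, star_trivial]

lemma aux_sa_sub_smul (H : E →L[ℝ] E) (hH : IsSelfAdjoint H) (r : ℝ) :
    IsSelfAdjoint (H - r • 1) := hH.sub (aux_sa_smul_one r)

lemma aux_approx_eigen (H : E →L[ℝ] E) (hH : IsSelfAdjoint H) {l δ : ℝ}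
    (hl : l ∈ spectrum ℝ H) (hδ : 0 < δ) :
    ∃ u : E, ‖u‖ = 1 ∧ ‖H u - l • u‖ ≤ δ := by
  have hns : ¬ IsUnit ((l • 1 : E →L[ℝ] E) - H) := by
    rw [spectrum.mem_iff, Algebra.algebraMap_eq_smul_one] at hl
    exact hl
  have hTsa : IsSelfAdjoint ((l • 1 : E →L[ℝ] E) - H) := (aux_sa_smul_one l).sub hH
  have hnb : ¬ ∀ x, (δ/2) * ‖x‖ ≤ ‖((l • 1 : E →L[ℝ] E) - H) x‖ := fun hc =>
    hns (aux_bddBelow_unit _ hTsa (by positivity) hc)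
  push_neg at hnb
  obtain ⟨x, hx⟩ := hnb
  have hx0 : x ≠ 0 := by
    rintro rfl
    simp only [map_zero, norm_zero, mul_zero] at hx
    exact lt_irrefl 0 hx
  have hxn : (0:ℝ) < ‖x‖ := norm_pos_iff.mpr hx0
  refine ⟨‖x‖⁻¹ • x, by simp [norm_smul, abs_of_pos hxn, inv_mul_cancel₀ hxn.ne'], ?_⟩
  have key : H (‖x‖⁻¹ • x) - l • (‖x‖⁻¹ • x) = -(‖x‖⁻¹ • (((l • 1 : E →L[ℝ] E) - H) x)) := by
    simp [smul_sub, smul_smul, mul_comm, smul_comm l]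
  rw [key, norm_neg, norm_smul]
  have : ‖((l • 1 : E →L[ℝ] E) - H) x‖ ≤ (δ/2) * ‖x‖ := hx.le
  rw [Real.norm_eq_abs, abs_of_pos (show (0:ℝ) < ‖x‖⁻¹ by positivity)]
  calc ‖x‖⁻¹ * ‖((l • 1 : E →L[ℝ] E) - H) x‖ ≤ ‖x‖⁻¹ * ((δ/2) * ‖x‖) := by
        exact mul_le_mul_of_nonneg_left this (by positivity)
  _ = δ/2 := by field_simp
  _ ≤ δ := by linarith

noncomputable def numInf (S : E →L[ℝ] E) : ℝ :=
  ⨅ x : {x : E // ‖x‖ = 1}, ⟪(x : E), S x⟫_ℝ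

omit [CompleteSpace E] in
lemma aux_inner_ge (S : E →L[ℝ] E) (x : E) (hx : ‖x‖ = 1) : -‖S‖ ≤ ⟪x, S x⟫_ℝ := by
  have h1 : |⟪x, S x⟫_ℝ| ≤ ‖x‖ * ‖S x‖ := abs_real_inner_le_norm x (S x)
  have h2 : ‖S x‖ ≤ ‖S‖ * ‖x‖ := S.le_opNorm x
  rw [hx] at h1 h2
  simp at h1 h2
  cases abs_le.mp h1 with
  | intro h _ => linarith

lemma aux_bddBelow_range (S : E →L[ℝ] E) :
    BddBelow (Set.range fun x : {x : E // ‖x‖ = 1} => ⟪(x : E), S x⟫_ℝ) := by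
  refine ⟨-‖S‖, ?_⟩
  rintro _ ⟨x, rfl⟩
  exact aux_inner_ge S x x.2

lemma numInf_le (S : E →L[ℝ] E) (x : E) (hx : ‖x‖ = 1) : numInf S ≤ ⟪x, S x⟫_ℝ :=
  ciInf_le (aux_bddBelow_range S) ⟨x, hx⟩

lemma aux_gcs (T : E →L[ℝ] E) (hT : IsSelfAdjoint T) (hpos : ∀ x, 0 ≤ ⟪x, T x⟫_ℝ) (x : E) :
    ‖T x‖ ^ 2 ≤ ‖T‖ * ⟪x, T x⟫_ℝ := by
  have key : ∀ y, ⟪x, T y⟫_ℝ ^ 2 ≤ ⟪x, T x⟫_ℝ * ⟪y, T y⟫_ℝ := by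
    intro y
    have hsym : ⟪y, T x⟫_ℝ = ⟪x, T y⟫_ℝ :=
      (hT.isSymmetric y x).symm.trans (real_inner_comm _ _)
    have hq : ∀ s : ℝ, 0 ≤ ⟪y, T y⟫_ℝ * (s * s) + (2 * ⟪x, T y⟫_ℝ) * s + ⟪x, T x⟫_ℝ := by
      intro s
      have h0 := hpos (x + s • y)
      have hexp : ⟪x + s • y, T (x + s • y)⟫_ℝ =
          ⟪y, T y⟫_ℝ * (s * s) + (2 * ⟪x, T y⟫_ℝ) * s + ⟪x, T x⟫_ℝ := by
        rw [map_add, map_smul, inner_add_left, inner_add_right, inner_add_right,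
          real_inner_smul_left, real_inner_smul_left, real_inner_smul_right,
          real_inner_smul_right, hsym]
        ring
      rw [hexp] at h0
      exact h0
    have hd := discrim_le_zero hq
    rw [discrim] at hd
    nlinarith
  have h1 := key (T x)
  have h2 : ⟪x, T (T x)⟫_ℝ = ‖T x‖ ^ 2 :=
    (hT.isSymmetric x (T x)).symm.trans (real_inner_self_eq_norm_sq (T x))
  have h3 : ⟪T x, T (T x)⟫_ℝ ≤ ‖T x‖ * (‖T‖ * ‖T x‖) := by
    calc ⟪T x, T (T x)⟫_ℝ ≤ ‖T x‖ * ‖T (T x)‖ := real_inner_le_norm _ _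
    _ ≤ ‖T x‖ * (‖T‖ * ‖T x‖) :=
        mul_le_mul_of_nonneg_left (T.le_opNorm (T x)) (norm_nonneg _)
  rw [h2] at h1
  have h4 := hpos x
  by_cases hz : ‖T x‖ = 0
  · rw [hz]
    simpa using mul_nonneg (norm_nonneg T) h4
  · have hzpos : 0 < ‖T x‖ := (norm_nonneg _).lt_of_ne (Ne.symm hz)
    nlinarith [mul_pos hzpos hzpos, mul_le_mul_of_nonneg_left h3 h4]

lemma aux_numInf_mem (S : E →L[ℝ] E) (hS : IsSelfAdjoint S) (x₀ : E) (hx₀ : ‖x₀‖ = 1) :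
    numInf S ∈ spectrum ℝ S := by
  haveI : Nonempty {x : E // ‖x‖ = 1} := ⟨⟨x₀, hx₀⟩⟩
  set q := numInf S with hqdef
  set T := S - q • (1 : E →L[ℝ] E) with hTdef
  have hTsa : IsSelfAdjoint T := aux_sa_sub_smul S hS q
  have hTx : ∀ x, T x = S x - q • x := by
    intro x
    simp [hTdef, ContinuousLinearMap.sub_apply, ContinuousLinearMap.smul_apply,
      ContinuousLinearMap.one_apply]
  have hTinner : ∀ x, ⟪x, T x⟫_ℝ = ⟪x, S x⟫_ℝ - q * ‖x‖ ^ 2 := by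
    intro x
    rw [hTx, inner_sub_right, real_inner_smul_right, real_inner_self_eq_norm_sq]
  have hpos : ∀ x, 0 ≤ ⟪x, T x⟫_ℝ := by
    intro x
    rcases eq_or_ne x 0 with rfl | hx0
    · simp
    · have hxn : (0:ℝ) < ‖x‖ := norm_pos_iff.mpr hx0
      have h1 : q ≤ ⟪(‖x‖⁻¹ • x : E), S (‖x‖⁻¹ • x)⟫_ℝ :=
        numInf_le S _ (by simp [norm_smul, abs_of_pos hxn, inv_mul_cancel₀ hxn.ne'])
      rw [map_smul, real_inner_smul_left, real_inner_smul_right] at h1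
      have h2 : q * ‖x‖ ^ 2 ≤ ⟪x, S x⟫_ℝ := by
        have hx2 : (0:ℝ) < ‖x‖ ^ 2 := by positivity
        have := mul_le_mul_of_nonneg_right h1 hx2.le
        calc q * ‖x‖ ^ 2 ≤ ‖x‖⁻¹ * (‖x‖⁻¹ * ⟪x, S x⟫_ℝ) * ‖x‖ ^ 2 := this
        _ = ⟪x, S x⟫_ℝ := by
              rw [pow_two]
              field_simp
      rw [hTinner]
      linarith
  rw [spectrum.mem_iff, Algebra.algebraMap_eq_smul_one]
  intro hUnit
  have hneg : q • (1 : E →L[ℝ] E) - S = -T := by rw [hTdef]; abel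
  rw [hneg] at hUnit
  have hUnit' : IsUnit T := by simpa using hUnit.neg
  obtain ⟨c, hc, hbd⟩ := aux_unit_bddBelow T hUnit'
  set η := 1 / (2 * c ^ 2 * (‖T‖ + 1)) with hηdef
  have hηpos : 0 < η := by positivity
  obtain ⟨⟨u, hu⟩, hult⟩ :=
    exists_lt_of_ciInf_lt (show numInf S < q + η by rw [← hqdef]; linarith)
  have hupos : 0 ≤ ⟪u, T u⟫_ℝ := hpos u
  have huη : ⟪u, T u⟫_ℝ < η := by
    have := hTinner u
    rw [hu] at this
    simp at this
    rw [this]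
    linarith
  have hgcs := aux_gcs T hTsa hpos u
  have hcu : 1 ≤ c * ‖T u‖ := by
    have := hbd u
    rw [hu] at this
    exact this
  have heq : c ^ 2 * (‖T‖ + 1) * η = 1 / 2 := by
    rw [hηdef]
    field_simp
  have ha : 1 ≤ c ^ 2 * ‖T u‖ ^ 2 := by nlinarith [norm_nonneg (T u)]
  have hb : ‖T‖ * ⟪u, T u⟫_ℝ ≤ (‖T‖ + 1) * η := by nlinarith [norm_nonneg T]
  have hcc : c ^ 2 * ‖T u‖ ^ 2 ≤ c ^ 2 * ((‖T‖ + 1) * η) :=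
    mul_le_mul_of_nonneg_left (hgcs.trans hb) (sq_nonneg c)
  nlinarith

lemma aux_numInf_le_spectrum (S : E →L[ℝ] E) (hS : IsSelfAdjoint S) {l : ℝ}
    (hl : l ∈ spectrum ℝ S) : numInf S ≤ l := by
  refine le_of_forall_pos_le_add fun δ hδ => ?_
  obtain ⟨u, hu, hub⟩ := aux_approx_eigen S hS hl hδ
  have h1 : numInf S ≤ ⟪u, S u⟫_ℝ := numInf_le S u hu
  have h2 : ⟪u, S u⟫_ℝ = ⟪u, S u - l • u⟫_ℝ + l := by
    rw [inner_sub_right, real_inner_smul_right, real_inner_self_eq_norm_sq, hu]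
    ring
  have h3 : ⟪u, S u - l • u⟫_ℝ ≤ δ := by
    calc ⟪u, S u - l • u⟫_ℝ ≤ ‖u‖ * ‖S u - l • u‖ := real_inner_le_norm _ _
    _ ≤ δ := by rw [hu, one_mul]; exact hub
  linarith

lemma aux_expand (H : E →L[ℝ] E) (s t : ℝ) :
    (H - s • 1) * (H - t • 1) = H * H - (s + t) • H + (s * t) • 1 := by
  ext x
  simp only [ContinuousLinearMap.mul_apply, ContinuousLinearMap.sub_apply,
    ContinuousLinearMap.add_apply, ContinuousLinearMap.smul_apply,
    ContinuousLinearMap.one_apply, map_sub, map_smul]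
  module

lemma aux_mem_spectrum_of_not_unit (H : E →L[ℝ] E) (r : ℝ) (hr : ¬ IsUnit (H - r • 1)) :
    r ∈ spectrum ℝ H := by
  rw [spectrum.mem_iff, Algebra.algebraMap_eq_smul_one]
  intro hu
  exact hr (by simpa [neg_sub] using hu.neg)

lemma aux_quad_spectrum (H : E →L[ℝ] E) (hH : IsSelfAdjoint H) {a b : ℝ}
    (hab : ∀ l ∈ spectrum ℝ H, 0 ≤ (l - a) * (l - b)) {μ : ℝ}
    (hμ : μ ∈ spectrum ℝ ((H - a • 1) * (H - b • 1))) : 0 ≤ μ := by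
  by_contra hneg
  push_neg at hneg
  rw [spectrum.mem_iff, Algebra.algebraMap_eq_smul_one] at hμ
  by_cases hD : 0 ≤ (a - b) ^ 2 + 4 * μ
  · -- real roots case
    set s := Real.sqrt ((a - b) ^ 2 + 4 * μ) with hsdef
    have hs : s ^ 2 = (a - b) ^ 2 + 4 * μ := Real.sq_sqrt hD
    set r₁ := (a + b + s) / 2 with hr₁
    set r₂ := (a + b - s) / 2 with hr₂
    have hsum : r₁ + r₂ = a + b := by rw [hr₁, hr₂]; ring
    have hprod : r₁ * r₂ = a * b - μ := by
      rw [hr₁, hr₂]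
      field_simp
      linear_combination -hs
    have hid : (H - a • 1) * (H - b • 1) - μ • 1 = (H - r₁ • 1) * (H - r₂ • 1) := by
      rw [aux_expand, aux_expand, hsum, hprod, sub_smul]
      abel
    have h2 : ¬ IsUnit ((H - r₁ • 1) * (H - r₂ • 1)) := by
      intro h
      apply hμ
      have heq : μ • (1 : E →L[ℝ] E) - (H - a • 1) * (H - b • 1) =
          -((H - r₁ • 1) * (H - r₂ • 1)) := by rw [← hid]; abel
      rw [heq]
      exact h.neg
    have h3 : ¬ IsUnit (H - r₁ • 1) ∨ ¬ IsUnit (H - r₂ • 1) := by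
      by_contra hcc
      push_neg at hcc
      exact h2 (hcc.1.mul hcc.2)
    rcases h3 with h | h
    · have hm := aux_mem_spectrum_of_not_unit H r₁ h
      have := hab r₁ hm
      have hroot : (r₁ - a) * (r₁ - b) = μ := by rw [hr₁]; linear_combination hs / 4
      linarith [hroot ▸ this]
    · have hm := aux_mem_spectrum_of_not_unit H r₂ h
      have := hab r₂ hm
      have hroot : (r₂ - a) * (r₂ - b) = μ := by rw [hr₂]; linear_combination hs / 4
      linarith [hroot ▸ this]
  · -- complex roots: operator is strictly positive hence invertible
    push_neg at hD
    set s₀ := (a + b) / 2 with hs₀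
    set k2 := -((a - b) ^ 2 + 4 * μ) / 4 with hk2
    have hk2pos : 0 < k2 := by rw [hk2]; linarith
    set A := H - s₀ • (1 : E →L[ℝ] E) with hA
    have hAsa : IsSelfAdjoint A := aux_sa_sub_smul H hH s₀
    set T' := (H - a • 1) * (H - b • 1) - μ • 1 with hT'
    have hid2 : T' = A * A + k2 • 1 := by
      rw [hT', hA, aux_expand, aux_expand]
      rw [show a + b = s₀ + s₀ by rw [hs₀]; ring,
        show (a * b) • (1 : E →L[ℝ] E) = (s₀ * s₀) • 1 + k2 • 1 + μ • 1 by
          rw [show a * b = s₀ * s₀ + k2 + μ by rw [hs₀, hk2]; ring, add_smul, add_smul]]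
      abel
    have hT'sa : IsSelfAdjoint T' := by
      rw [hid2]
      have hAA : IsSelfAdjoint (A * A) := by rw [IsSelfAdjoint, star_mul, hAsa.star_eq]
      exact hAA.add (aux_sa_smul_one k2)
    have hinner : ∀ x, ⟪x, T' x⟫_ℝ = ‖A x‖ ^ 2 + k2 * ‖x‖ ^ 2 := by
      intro x
      have happ : T' x = A (A x) + k2 • x := by
        rw [hid2]
        simp [ContinuousLinearMap.add_apply, ContinuousLinearMap.mul_apply,
          ContinuousLinearMap.smul_apply, ContinuousLinearMap.one_apply]
      have hsym : ⟪x, A (A x)⟫_ℝ = ⟪A x, A x⟫_ℝ := (hAsa.isSymmetric x (A x)).symm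
      rw [happ, inner_add_right, real_inner_smul_right, real_inner_self_eq_norm_sq,
        hsym, real_inner_self_eq_norm_sq]
    have hbdd : ∀ x, k2 * ‖x‖ ≤ ‖T' x‖ := by
      intro x
      rcases eq_or_ne x 0 with rfl | hx0
      · simp
      · have hxn : (0:ℝ) < ‖x‖ := norm_pos_iff.mpr hx0
        have h1 : k2 * ‖x‖ ^ 2 ≤ ⟪x, T' x⟫_ℝ := by
          rw [hinner]
          nlinarith [sq_nonneg (‖A x‖)]
        have h2 : ⟪x, T' x⟫_ℝ ≤ ‖x‖ * ‖T' x‖ := real_inner_le_norm _ _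
        nlinarith
    have hUnit : IsUnit T' := aux_bddBelow_unit T' hT'sa hk2pos hbdd
    apply hμ
    have heq : μ • (1 : E →L[ℝ] E) - (H - a • 1) * (H - b • 1) = -T' := by rw [hT']; abel
    rw [heq]
    exact hUnit.neg

lemma aux_gap (H : E →L[ℝ] E) (hH : IsSelfAdjoint H) (x₀ : E) (hx₀ : ‖x₀‖ = 1)
    {l : ℝ} (hl : l ∈ spectrum ℝ H) (hql : numInf H < l) : secondMinMax H ≤ l := by
  set q := numInf H with hqdef
  set g := l - q with hgdef
  have hgpos : 0 < g := by rw [hgdef]; linarith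
  have main : ∀ δ : ℝ, 0 < δ → δ ≤ g / 4 → secondMinMax H ≤ l + 4 * δ := by
    intro δ hδ hδg
    obtain ⟨u, hu, hub⟩ := aux_approx_eigen H hH (aux_numInf_mem H hH x₀ hx₀) hδ
    obtain ⟨w, hw, hwb⟩ := aux_approx_eigen H hH hl hδ
    set eu := H u - q • u with heu
    set ew := H w - l • w with hew
    set t := ⟪u, w⟫_ℝ with htdef
    have euu : ⟪u, u⟫_ℝ = 1 := by
      rw [real_inner_self_eq_norm_sq, hu]; norm_num
    have eww : ⟪w, w⟫_ℝ = 1 := by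
      rw [real_inner_self_eq_norm_sq, hw]; norm_num
    have hsym : ⟪H u, w⟫_ℝ = ⟪u, H w⟫_ℝ := hH.isSymmetric u w
    -- bound on t
    have hlqt : g * t = ⟪eu, w⟫_ℝ - ⟪u, ew⟫_ℝ := by
      rw [heu, hew, inner_sub_left, inner_sub_right, real_inner_smul_left,
        real_inner_smul_right, hsym, hgdef, htdef]
      ring
    have hieu : |⟪eu, w⟫_ℝ| ≤ δ := by
      calc |⟪eu, w⟫_ℝ| ≤ ‖eu‖ * ‖w‖ := abs_real_inner_le_norm _ _
      _ ≤ δ := by rw [hw, mul_one]; exact hub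
    have hiew : |⟪u, ew⟫_ℝ| ≤ δ := by
      calc |⟪u, ew⟫_ℝ| ≤ ‖u‖ * ‖ew‖ := abs_real_inner_le_norm _ _
      _ ≤ δ := by rw [hu, one_mul]; exact hwb
    have ht2 : |t| ≤ 1 / 2 := by
      have h1 : g * |t| ≤ 2 * δ := by
        calc g * |t| = |g * t| := by rw [abs_mul, abs_of_pos hgpos]
        _ = |⟪eu, w⟫_ℝ - ⟪u, ew⟫_ℝ| := by rw [hlqt]
        _ ≤ |⟪eu, w⟫_ℝ| + |⟪u, ew⟫_ℝ| := abs_sub _ _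
        _ ≤ 2 * δ := by linarith
      nlinarith [abs_nonneg t]
    -- inner products against H - l
    have hd1 : ⟪u, H u - l • u⟫_ℝ ≤ δ := by
      have : ⟪u, H u - l • u⟫_ℝ = ⟪u, eu⟫_ℝ - g := by
        rw [heu, inner_sub_right, inner_sub_right, real_inner_smul_right,
          real_inner_smul_right, euu, hgdef]
        ring
      rw [this]
      have : ⟪u, eu⟫_ℝ ≤ δ := by
        calc ⟪u, eu⟫_ℝ ≤ ‖u‖ * ‖eu‖ := real_inner_le_norm _ _
        _ ≤ δ := by rw [hu, one_mul]; exact hub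
      linarith
    have hd2 : ⟪w, H w - l • w⟫_ℝ ≤ δ := by
      calc ⟪w, H w - l • w⟫_ℝ ≤ ‖w‖ * ‖ew‖ := by rw [← hew]; exact real_inner_le_norm _ _
      _ ≤ δ := by rw [hw, one_mul]; exact hwb
    have hc1 : |⟪u, H w - l • w⟫_ℝ| ≤ δ := by rw [← hew]; exact hiew
    have hc2 : |⟪w, H u - l • u⟫_ℝ| ≤ δ := by
      have e1 : ⟪w, H u⟫_ℝ = ⟪u, H w⟫_ℝ := (real_inner_comm (H u) w).trans hsym
      have e2 : ⟪w, u⟫_ℝ = ⟪u, w⟫_ℝ := real_inner_comm u w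
      have : ⟪w, H u - l • u⟫_ℝ = ⟪u, H w - l • w⟫_ℝ := by
        rw [inner_sub_right, inner_sub_right, real_inner_smul_right, real_inner_smul_right,
          e1, e2]
      rw [this]
      exact hc1
    -- now fix v and construct the test vector
    have hnE : Nonempty E := ⟨0⟩
    rw [secondMinMax]
    refine ciSup_le fun v => ?_
    obtain ⟨α, β, hne, horth⟩ :
        ∃ α β : ℝ, 0 < α ^ 2 + β ^ 2 ∧ α * ⟪u, v⟫_ℝ + β * ⟪w, v⟫_ℝ = 0 := by
      by_cases hz : ⟪u, v⟫_ℝ = 0 ∧ ⟪w, v⟫_ℝ = 0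
      · exact ⟨1, 0, by norm_num, by rw [hz.1, hz.2]; ring⟩
      · refine ⟨⟪w, v⟫_ℝ, -⟪u, v⟫_ℝ, ?_, by ring⟩
        rcases not_and_or.mp hz with h | h
        · have := abs_pos.mpr h
          nlinarith [sq_nonneg (⟪w, v⟫_ℝ), sq_abs (⟪u, v⟫_ℝ)]
        · have := abs_pos.mpr h
          nlinarith [sq_nonneg (⟪u, v⟫_ℝ), sq_abs (⟪w, v⟫_ℝ)]
    set x := α • u + β • w with hxdef
    have hx2 : ‖x‖ ^ 2 = α ^ 2 + β ^ 2 + 2 * α * β * t := by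
      rw [← real_inner_self_eq_norm_sq, hxdef]
      simp only [inner_add_left, inner_add_right, real_inner_smul_left, real_inner_smul_right,
        euu, eww]
      rw [real_inner_comm u w, ← htdef]
      ring
    have hxlb : (α ^ 2 + β ^ 2) / 2 ≤ ‖x‖ ^ 2 := by
      rw [hx2]
      rcases abs_le.mp ht2 with ⟨htl, htr⟩
      rcases le_or_gt 0 (α * β) with hab | hab
      · nlinarith [sq_nonneg (α - β)]
      · nlinarith [sq_nonneg (α + β)]
    have hxpos : 0 < ‖x‖ ^ 2 := lt_of_lt_of_le (by linarith) hxlb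
    have hxn : 0 < ‖x‖ := by
      by_contra hcon
      push_neg at hcon
      have : ‖x‖ = 0 := le_antisymm hcon (norm_nonneg x)
      rw [this] at hxpos
      norm_num at hxpos
    -- key bound
    have hkey : ⟪x, H x - l • x⟫_ℝ ≤ 2 * (α ^ 2 + β ^ 2) * δ := by
      have hHx : H x - l • x = α • (H u - l • u) + β • (H w - l • w) := by
        rw [hxdef]
        simp only [map_add, map_smul, smul_add, smul_smul, smul_sub]
        rw [mul_comm l α, mul_comm l β]
        abel
      rw [hHx, hxdef]
      have hexp : ⟪α • u + β • w, α • (H u - l • u) + β • (H w - l • w)⟫_ℝ =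
          α ^ 2 * ⟪u, H u - l • u⟫_ℝ + α * β * ⟪u, H w - l • w⟫_ℝ +
          α * β * ⟪w, H u - l • u⟫_ℝ + β ^ 2 * ⟪w, H w - l • w⟫_ℝ := by
        simp only [inner_add_left, inner_add_right, real_inner_smul_left, real_inner_smul_right]
        ring
      rw [hexp]
      have hb1 : α ^ 2 * ⟪u, H u - l • u⟫_ℝ ≤ α ^ 2 * δ :=
        mul_le_mul_of_nonneg_left hd1 (sq_nonneg α)
      have hb4 : β ^ 2 * ⟪w, H w - l • w⟫_ℝ ≤ β ^ 2 * δ :=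
        mul_le_mul_of_nonneg_left hd2 (sq_nonneg β)
      have hb2 : α * β * ⟪u, H w - l • w⟫_ℝ ≤ |α * β| * δ := by
        calc α * β * ⟪u, H w - l • w⟫_ℝ ≤ |α * β * ⟪u, H w - l • w⟫_ℝ| := le_abs_self _
        _ = |α * β| * |⟪u, H w - l • w⟫_ℝ| := abs_mul _ _
        _ ≤ |α * β| * δ := mul_le_mul_of_nonneg_left hc1 (abs_nonneg _)
      have hb3 : α * β * ⟪w, H u - l • u⟫_ℝ ≤ |α * β| * δ := by
        calc α * β * ⟪w, H u - l • u⟫_ℝ ≤ |α * β * ⟪w, H u - l • u⟫_ℝ| := le_abs_self _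
        _ = |α * β| * |⟪w, H u - l • u⟫_ℝ| := abs_mul _ _
        _ ≤ |α * β| * δ := mul_le_mul_of_nonneg_left hc2 (abs_nonneg _)
      have habs : |α * β| * 2 ≤ α ^ 2 + β ^ 2 := by
        rcases le_or_gt 0 (α * β) with hab | hab
        · rw [abs_of_nonneg hab]; nlinarith [sq_nonneg (α - β)]
        · rw [abs_of_neg hab]; nlinarith [sq_nonneg (α + β)]
      nlinarith
    -- the normalized test vector
    set ψ' := ‖x‖⁻¹ • x with hψ'def
    have hψ'norm : ‖ψ'‖ = 1 := by
      rw [hψ'def, norm_smul, Real.norm_eq_abs, abs_of_pos (by positivity),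
        inv_mul_cancel₀ hxn.ne']
    have hψ'orth : ⟪ψ', v⟫_ℝ = 0 := by
      rw [hψ'def, real_inner_smul_left, hxdef, inner_add_left, real_inner_smul_left,
        real_inner_smul_left, horth, mul_zero]
    have hψ'H : ⟪ψ', H ψ'⟫_ℝ ≤ l + 4 * δ := by
      have h1 : ⟪ψ', H ψ'⟫_ℝ = (‖x‖ ^ 2)⁻¹ * ⟪x, H x⟫_ℝ := by
        rw [hψ'def, map_smul, real_inner_smul_left, real_inner_smul_right]
        rw [pow_two, mul_inv]
        ring
      have h2 : ⟪x, H x⟫_ℝ - l * ‖x‖ ^ 2 = ⟪x, H x - l • x⟫_ℝ := by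
        rw [inner_sub_right, real_inner_smul_right, real_inner_self_eq_norm_sq]
      have h3 : ⟪x, H x⟫_ℝ ≤ l * ‖x‖ ^ 2 + 2 * (α ^ 2 + β ^ 2) * δ := by linarith
      have h5 : 2 * (α ^ 2 + β ^ 2) ≤ 4 * ‖x‖ ^ 2 := by linarith
      rw [h1]
      rw [inv_mul_le_iff₀ hxpos]
      calc ⟪x, H x⟫_ℝ ≤ l * ‖x‖ ^ 2 + 2 * (α ^ 2 + β ^ 2) * δ := h3
      _ ≤ l * ‖x‖ ^ 2 + 4 * ‖x‖ ^ 2 * δ := by nlinarith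
      _ = ‖x‖ ^ 2 * (l + 4 * δ) := by ring
    -- conclude for this v
    have hbdd : BddBelow (Set.range fun ψ : {ψ : E // ‖ψ‖ = 1 ∧ ⟪ψ, v⟫_ℝ = 0} =>
        ⟪(ψ : E), H ψ⟫_ℝ) := by
      refine ⟨-‖H‖, ?_⟩
      rintro _ ⟨⟨z, hz1, hz2⟩, rfl⟩
      exact aux_inner_ge H z hz1
    calc (⨅ ψ : {ψ : E // ‖ψ‖ = 1 ∧ ⟪ψ, v⟫_ℝ = 0}, ⟪(ψ : E), H ψ⟫_ℝ) ≤ ⟪ψ', H ψ'⟫_ℝ :=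
          ciInf_le hbdd ⟨ψ', hψ'norm, hψ'orth⟩
    _ ≤ l + 4 * δ := hψ'H
  refine le_of_forall_pos_le_add fun ε hε => ?_
  have hδ : 0 < min (ε / 4) (g / 4) := lt_min (by linarith) (by linarith)
  have := main (min (ε / 4) (g / 4)) hδ (min_le_right _ _)
  have h4 : 4 * min (ε / 4) (g / 4) ≤ ε := by
    have := min_le_left (ε / 4) (g / 4)
    linarith
  linarith

end TempleAux

/-- Temple's inequality: if `H` is self-adjoint, `ψ` is a unit vector with
`⟨ψ, Hψ⟩ < E₁(H)` (the second min-max value), then the lowest spectral value satisfies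
`E₀(H) ≥ ⟨ψ,Hψ⟩ - (⟨Hψ,Hψ⟩ - ⟨ψ,Hψ⟩²)/(E₁(H) - ⟨ψ,Hψ⟩)`. -/
theorem temple_inequality {E : Type*} [NormedAddCommGroup E] [InnerProductSpace ℝ E]
    [CompleteSpace E] (H : E →L[ℝ] E) (hH : IsSelfAdjoint H)
    (ψ : E) (hψ : ‖ψ‖ = 1) (hlt : ⟪ψ, H ψ⟫_ℝ < secondMinMax H) :
    sInf (spectrum ℝ H) ≥
      ⟪ψ, H ψ⟫_ℝ - (⟪H ψ, H ψ⟫_ℝ - ⟪ψ, H ψ⟫_ℝ ^ 2) / (secondMinMax H - ⟪ψ, H ψ⟫_ℝ) := by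
  set q := numInf H with hqdef
  set m := secondMinMax H with hmdef
  set ε := ⟪ψ, H ψ⟫_ℝ with hεdef
  have hqmem : q ∈ spectrum ℝ H := aux_numInf_mem H hH ψ hψ
  have hqε : q ≤ ε := numInf_le H ψ hψ
  have hεm : ε < m := hlt
  have hgap : ∀ l ∈ spectrum ℝ H, 0 ≤ (l - q) * (l - m) := by
    intro l hl
    have hql : q ≤ l := aux_numInf_le_spectrum H hH hl
    rcases eq_or_lt_of_le hql with heq | hlt'
    · rw [← heq]; simp
    · have hml : m ≤ l := aux_gap H hH ψ hψ hl hlt'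
      nlinarith
  set S' := (H - q • 1) * (H - m • 1) with hS'def
  have hS'sa : IsSelfAdjoint S' := by
    rw [hS'def, aux_expand]
    have h1 : IsSelfAdjoint (H * H) := by rw [IsSelfAdjoint, star_mul, hH.star_eq]
    have h2 : IsSelfAdjoint ((q + m) • H) := by
      rw [IsSelfAdjoint, star_smul, star_trivial, hH.star_eq]
    exact (h1.sub h2).add (aux_sa_smul_one (q * m))
  have h0 : 0 ≤ numInf S' :=
    aux_quad_spectrum H hH hgap (by rw [← hS'def]; exact aux_numInf_mem S' hS'sa ψ hψ)
  have hψS : 0 ≤ ⟪ψ, S' ψ⟫_ℝ := le_trans h0 (numInf_le S' ψ hψ)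
  have hexp : ⟪ψ, S' ψ⟫_ℝ = ⟪H ψ, H ψ⟫_ℝ - (q + m) * ε + q * m := by
    have happ : S' ψ = H (H ψ) - (q + m) • H ψ + (q * m) • ψ := by
      rw [hS'def, aux_expand]
      simp [ContinuousLinearMap.add_apply, ContinuousLinearMap.sub_apply,
        ContinuousLinearMap.mul_apply, ContinuousLinearMap.smul_apply,
        ContinuousLinearMap.one_apply]
    have hsym : ⟪ψ, H (H ψ)⟫_ℝ = ⟪H ψ, H ψ⟫_ℝ := (hH.isSymmetric ψ (H ψ)).symm
    rw [happ, inner_add_right, inner_sub_right, real_inner_smul_right, real_inner_smul_right,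
      real_inner_self_eq_norm_sq, hψ, hsym, ← hεdef]
    ring
  rw [hexp] at hψS
  have hmε : 0 < m - ε := by linarith
  have h1 : (ε - q) * (m - ε) ≤ ⟪H ψ, H ψ⟫_ℝ - ε ^ 2 := by nlinarith
  have hfinal : ε - (⟪H ψ, H ψ⟫_ℝ - ε ^ 2) / (m - ε) ≤ q := by
    have h2 : (ε - q) ≤ (⟪H ψ, H ψ⟫_ℝ - ε ^ 2) / (m - ε) := by
      rw [le_div_iff₀ hmε]
      exact h1
    linarith
  refine le_trans hfinal (le_csInf ⟨q, hqmem⟩ fun b hb => aux_numInf_le_spectrum H hH hb)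
end

section
/- Let H be a self-adjoint operator on a Hilbert space with discrete eigenvalues E₀ ≤ E₁ ≤ ⋯ below its essential spectrum, let W ≥ 0 be a bounded self-adjoint operator, and let ψ be a normalized eigenvector of H with eigenvalue E₀. If ‖W‖ ≤ (E₁ - E₀)/3, then ⟨ψ, (H + W)ψ⟩ - E₁(H + W) ≤ -2(E₁ - E₀)/3 < 0, and consequently by Temple's inequality E₀(H + W) ≥ E₀ + ⟨ψ, Wψ⟩ - 3/(E₁-E₀) · ⟨Wψ, Wψ⟩. -/
open scoped InnerProductSpace

section Aux

variable {E : Type*} [NormedAddCommGroup E] [InnerProductSpace ℝ E]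

lemma temple_quad_abs_le (A : E →L[ℝ] E) {u : E} (hu : ‖u‖ = 1) : |⟪u, A u⟫_ℝ| ≤ ‖A‖ := by
  calc |⟪u, A u⟫_ℝ| ≤ ‖u‖ * ‖A u‖ := abs_real_inner_le_norm u (A u)
    _ ≤ ‖u‖ * (‖A‖ * ‖u‖) := by gcongr; exact A.le_opNorm u
    _ = ‖A‖ := by rw [hu]; ring

lemma temple_bddBelow (A : E →L[ℝ] E) (v : E) :
    BddBelow (Set.range fun u : {u : E // ‖u‖ = 1 ∧ ⟪u, v⟫_ℝ = 0} => ⟪(u : E), A u⟫_ℝ) := by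
  refine ⟨-‖A‖, ?_⟩
  rintro x ⟨u, rfl⟩
  have h := temple_quad_abs_le A u.2.1
  have := neg_abs_le ⟪(u : E), A u⟫_ℝ
  linarith

lemma temple_smul_quad (A : E →L[ℝ] E) (c : ℝ) (v : E) :
    ⟪c • v, A (c • v)⟫_ℝ = c ^ 2 * ⟪v, A v⟫_ℝ := by
  rw [map_smul, real_inner_smul_left, real_inner_smul_right]; ring

lemma temple_secondMinMax_mono (H W : E →L[ℝ] E) (hWpos : ∀ v : E, 0 ≤ ⟪v, W v⟫_ℝ) :
    secondMinMax H ≤ secondMinMax (H + W) := by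
  unfold secondMinMax
  apply ciSup_mono
  · refine ⟨‖H + W‖, ?_⟩
    rintro x ⟨v, rfl⟩
    rcases isEmpty_or_nonempty {u : E // ‖u‖ = 1 ∧ ⟪u, v⟫_ℝ = 0} with h | h
    · simp only [iInf_of_isEmpty, Real.sInf_empty]; exact norm_nonneg _
    · obtain ⟨u⟩ := h
      exact ciInf_le_of_le (temple_bddBelow _ v) u
        (le_of_abs_le (temple_quad_abs_le _ u.2.1))
  · intro v
    rcases isEmpty_or_nonempty {u : E // ‖u‖ = 1 ∧ ⟪u, v⟫_ℝ = 0} with h | h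
    · simp only [iInf_of_isEmpty]; exact le_refl _
    · refine ciInf_mono (temple_bddBelow _ v) fun u => ?_
      have h := hWpos (u : E)
      simp only [ContinuousLinearMap.add_apply, inner_add_right]
      linarith

/-- Min-max step: every unit vector orthogonal to the ground state has Rayleigh quotient
at least `max E₀ (secondMinMax H)`-ish: we show `secondMinMax H ≤ max E₀ ⟪w, H w⟫`. -/
lemma temple_secondMinMax_le_max (H : E →L[ℝ] E)
    (hsym : ∀ x y : E, ⟪H x, y⟫_ℝ = ⟪x, H y⟫_ℝ)
    (E₀ : ℝ) (ψ : E) (hψ : ‖ψ‖ = 1) (heig : H ψ = E₀ • ψ)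
    (w : E) (hw : ‖w‖ = 1) (how : ⟪ψ, w⟫_ℝ = 0) :
    secondMinMax H ≤ max E₀ ⟪w, H w⟫_ℝ := by
  have hquadψ : ⟪ψ, H ψ⟫_ℝ = E₀ := by
    rw [heig, real_inner_smul_right, real_inner_self_eq_norm_sq, hψ]; ring
  have hwψ : ⟪w, ψ⟫_ℝ = 0 := by rw [real_inner_comm]; exact how
  have hcross1 : ⟪ψ, H w⟫_ℝ = 0 := by
    rw [← hsym, heig, real_inner_smul_left, how]; ring
  have hcross2 : ⟪w, H ψ⟫_ℝ = 0 := by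
    rw [heig, real_inner_smul_right, hwψ]; ring
  refine ciSup_le fun v => ?_
  set a : ℝ := ⟪w, v⟫_ℝ with ha
  set b : ℝ := -⟪ψ, v⟫_ℝ with hb
  by_cases hab : a = 0 ∧ b = 0
  · refine ciInf_le_of_le (temple_bddBelow _ v) ⟨ψ, hψ, by rw [← neg_eq_zero]; exact hab.2⟩ ?_
    rw [hquadψ]; exact le_max_left _ _
  · have hab2 : 0 < a ^ 2 + b ^ 2 := by
      rcases not_and_or.mp hab with h | h <;> positivity
    set r : ℝ := Real.sqrt (a ^ 2 + b ^ 2) with hr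
    have hr0 : 0 < r := Real.sqrt_pos.mpr hab2
    have hr2 : r ^ 2 = a ^ 2 + b ^ 2 := Real.sq_sqrt hab2.le
    set u : E := r⁻¹ • (a • ψ + b • w) with hu
    have hinner : ⟪a • ψ, b • w⟫_ℝ = 0 := by
      rw [real_inner_smul_left, real_inner_smul_right, how]; ring
    have hnsq : ‖a • ψ + b • w‖ ^ 2 = a ^ 2 + b ^ 2 := by
      rw [norm_add_sq_real, hinner, norm_smul, norm_smul, hψ, hw]
      simp [mul_pow, sq_abs]
    have hn : ‖a • ψ + b • w‖ = r := by
      rw [hr, ← hnsq, Real.sqrt_sq (norm_nonneg _)]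
    have hun : ‖u‖ = 1 := by
      rw [hu, norm_smul, hn, norm_inv, Real.norm_eq_abs, abs_of_pos hr0,
        inv_mul_cancel₀ hr0.ne']
    have huv : ⟪u, v⟫_ℝ = 0 := by
      rw [hu, real_inner_smul_left, inner_add_left, real_inner_smul_left,
        real_inner_smul_left, ← ha, ← neg_neg ⟪ψ, v⟫_ℝ, ← hb]
      ring
    have hval : ⟪u, H u⟫_ℝ = r⁻¹ ^ 2 * (a ^ 2 * E₀ + b ^ 2 * ⟪w, H w⟫_ℝ) := by
      rw [hu, temple_smul_quad]
      congr 1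
      simp only [map_add, map_smul, inner_add_left, inner_add_right,
        real_inner_smul_left, real_inner_smul_right, hquadψ, hcross1, hcross2]
      ring
    refine ciInf_le_of_le (temple_bddBelow _ v) ⟨u, hun, huv⟩ ?_
    rw [hval]
    set M : ℝ := max E₀ ⟪w, H w⟫_ℝ with hM
    have h1 : E₀ ≤ M := le_max_left _ _
    have h2 : ⟪w, H w⟫_ℝ ≤ M := le_max_right _ _
    have hsum : r⁻¹ ^ 2 * (a ^ 2 + b ^ 2) = 1 := by
      rw [← hr2]; field_simp
    calc r⁻¹ ^ 2 * (a ^ 2 * E₀ + b ^ 2 * ⟪w, H w⟫_ℝ)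
        ≤ r⁻¹ ^ 2 * (a ^ 2 * M + b ^ 2 * M) := by
          have e1 : a ^ 2 * E₀ ≤ a ^ 2 * M := mul_le_mul_of_nonneg_left h1 (sq_nonneg a)
          have e2 : b ^ 2 * ⟪w, H w⟫_ℝ ≤ b ^ 2 * M := mul_le_mul_of_nonneg_left h2 (sq_nonneg b)
          exact mul_le_mul_of_nonneg_left (add_le_add e1 e2) (sq_nonneg _)
      _ = M := by
          rw [show a ^ 2 * M + b ^ 2 * M = (a ^ 2 + b ^ 2) * M by ring, ← mul_assoc, hsum,
            one_mul]

/-- Generalized Cauchy–Schwarz for a positive symmetric operator. -/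
lemma temple_pos_op_sq (T : E →L[ℝ] E)
    (hsym : ∀ x y : E, ⟪T x, y⟫_ℝ = ⟪x, T y⟫_ℝ)
    (hpos : ∀ x : E, 0 ≤ ⟪x, T x⟫_ℝ) (v : E) :
    ‖T v‖ ^ 2 ≤ ‖T‖ * ⟪v, T v⟫_ℝ := by
  have CS : ∀ x y : E, ⟪x, T y⟫_ℝ ^ 2 ≤ ⟪x, T x⟫_ℝ * ⟪y, T y⟫_ℝ := by
    intro x y
    have key : ∀ t : ℝ, 0 ≤ ⟪y, T y⟫_ℝ * (t * t) + (2 * ⟪x, T y⟫_ℝ) * t + ⟪x, T x⟫_ℝ := by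
      intro t
      have h := hpos (x + t • y)
      have hyx : ⟪y, T x⟫_ℝ = ⟪x, T y⟫_ℝ := by
        rw [← hsym x y, real_inner_comm]
      rw [map_add, map_smul, inner_add_left, inner_add_right, inner_add_right,
        real_inner_smul_left, real_inner_smul_left, real_inner_smul_right,
        real_inner_smul_right, hyx] at h
      nlinarith [h]
    have hd := discrim_le_zero key
    rw [discrim] at hd
    nlinarith [hd]
  have h1 := CS (T v) v
  have h2 : ⟪T v, T v⟫_ℝ = ‖T v‖ ^ 2 := real_inner_self_eq_norm_sq (T v)
  have h3 : ⟪T v, T (T v)⟫_ℝ ≤ ‖T‖ * ‖T v‖ ^ 2 := by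
    calc ⟪T v, T (T v)⟫_ℝ ≤ ‖T v‖ * ‖T (T v)‖ := real_inner_le_norm _ _
      _ ≤ ‖T v‖ * (‖T‖ * ‖T v‖) := by gcongr; exact T.le_opNorm _
      _ = ‖T‖ * ‖T v‖ ^ 2 := by ring
  have hvTv : ⟪v, T v⟫_ℝ = ⟪T v, v⟫_ℝ := real_inner_comm _ _
  rcases eq_or_ne (T v) 0 with h0 | h0
  · rw [h0]; simp
  · have hTv : 0 < ‖T v‖ ^ 2 := pow_pos (norm_pos_iff.mpr h0) 2
    rw [h2, hvTv] at h1
    have h5 : 0 ≤ ⟪T v, v⟫_ℝ := hvTv ▸ hpos v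
    have h4 : ‖T v‖ ^ 2 * ‖T v‖ ^ 2 ≤ (‖T‖ * ⟪v, T v⟫_ℝ) * ‖T v‖ ^ 2 := by
      calc ‖T v‖ ^ 2 * ‖T v‖ ^ 2 = (‖T v‖ ^ 2) ^ 2 := by ring
        _ ≤ ⟪T v, T (T v)⟫_ℝ * ⟪T v, v⟫_ℝ := h1
        _ ≤ (‖T‖ * ‖T v‖ ^ 2) * ⟪T v, v⟫_ℝ := mul_le_mul_of_nonneg_right h3 h5
        _ = (‖T‖ * ⟪v, T v⟫_ℝ) * ‖T v‖ ^ 2 := by rw [hvTv]; ring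
    exact le_of_mul_le_mul_right h4 hTv

end Aux

section Aux2

variable {E : Type*} [NormedAddCommGroup E] [InnerProductSpace ℝ E] [CompleteSpace E]

lemma temple_isUnit_of_coercive (T : E →L[ℝ] E) (c : ℝ) (hc : 0 < c)
    (h : ∀ v : E, c * ‖v‖ ^ 2 ≤ ⟪T v, v⟫_ℝ) : IsUnit T := by
  set B : E →L[ℝ] E →L[ℝ] ℝ := LinearMap.mkContinuous₂
    (LinearMap.mk₂ ℝ (fun v w => ⟪T v, w⟫_ℝ)
      (fun x y z => by simp only [map_add, inner_add_left])
      (fun a x y => by simp only [map_smul, real_inner_smul_left, smul_eq_mul])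
      (fun x y z => by simp only [inner_add_right])
      (fun a x y => by simp only [real_inner_smul_right, smul_eq_mul]))
    ‖T‖ (fun x y => by
      simp only [LinearMap.mk₂_apply]
      calc ‖⟪T x, y⟫_ℝ‖ ≤ ‖T x‖ * ‖y‖ := norm_inner_le_norm _ _
        _ ≤ ‖T‖ * ‖x‖ * ‖y‖ := by gcongr; exact T.le_opNorm x) with hB
  have hBapp : ∀ x y : E, B x y = ⟪T x, y⟫_ℝ := fun x y => rfl
  have hcoer : IsCoercive B := by
    refine ⟨c, hc, fun u => ?_⟩
    rw [hBapp]
    have := h u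
    nlinarith [this]
  set e := hcoer.continuousLinearEquivOfBilin with he
  have heq : (e : E →L[ℝ] E) = T := by
    refine ContinuousLinearMap.ext fun v => ?_
    refine ext_inner_right ℝ fun w => ?_
    rw [ContinuousLinearEquiv.coe_coe]
    rw [hcoer.continuousLinearEquivOfBilin_apply, hBapp]
  exact heq ▸ ⟨e.toUnit, rfl⟩

lemma temple_not_mem_spectrum (A : E →L[ℝ] E) (R x : ℝ) (hx : x < R)
    (h : ∀ v : E, R * ‖v‖ ^ 2 ≤ ⟪v, A v⟫_ℝ) : x ∉ spectrum ℝ A := by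
  rw [spectrum.notMem_iff]
  have hT : IsUnit (A - x • (1 : E →L[ℝ] E)) := by
    apply temple_isUnit_of_coercive _ (R - x) (by linarith)
    intro v
    have h1 := h v
    have h2 : ⟪(A - x • (1 : E →L[ℝ] E)) v, v⟫_ℝ = ⟪v, A v⟫_ℝ - x * ‖v‖ ^ 2 := by
      simp only [ContinuousLinearMap.sub_apply, ContinuousLinearMap.smul_apply,
        ContinuousLinearMap.one_apply, inner_sub_left, real_inner_smul_left]
      rw [real_inner_comm (A v) v, real_inner_self_eq_norm_sq]
    rw [h2]; linarith
  have hrew : (algebraMap ℝ (E →L[ℝ] E)) x - A = -(A - x • (1 : E →L[ℝ] E)) := by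
    rw [Algebra.algebraMap_eq_smul_one, neg_sub]
  rw [hrew]
  exact hT.neg

lemma temple_inf_mem_spectrum (A : E →L[ℝ] E)
    (hsym : ∀ x y : E, ⟪A x, y⟫_ℝ = ⟪x, A y⟫_ℝ) (ψ : E) (hψ : ‖ψ‖ = 1) :
    sInf {r : ℝ | ∃ v : E, ‖v‖ = 1 ∧ ⟪v, A v⟫_ℝ = r} ∈ spectrum ℝ A := by
  set S : Set ℝ := {r : ℝ | ∃ v : E, ‖v‖ = 1 ∧ ⟪v, A v⟫_ℝ = r} with hS
  have hne : S.Nonempty := ⟨⟪ψ, A ψ⟫_ℝ, ψ, hψ, rfl⟩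
  have hbdd : BddBelow S := by
    refine ⟨-‖A‖, ?_⟩
    rintro r ⟨v, hv, rfl⟩
    have h := temple_quad_abs_le A hv
    have := neg_abs_le ⟪v, A v⟫_ℝ
    linarith
  set m : ℝ := sInf S with hm
  by_contra hmem
  rw [spectrum.notMem_iff] at hmem
  set T : E →L[ℝ] E := A - m • (1 : E →L[ℝ] E) with hT
  have hTunit : IsUnit T := by
    have hrew : T = -((algebraMap ℝ (E →L[ℝ] E)) m - A) := by
      rw [Algebra.algebraMap_eq_smul_one, neg_sub]
    rw [hrew]
    exact hmem.neg
  have hTval : ∀ v : E, ⟪v, T v⟫_ℝ = ⟪v, A v⟫_ℝ - m * ‖v‖ ^ 2 := by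
    intro v
    simp only [hT, ContinuousLinearMap.sub_apply, ContinuousLinearMap.smul_apply,
      ContinuousLinearMap.one_apply, inner_sub_right, real_inner_smul_right]
    rw [real_inner_self_eq_norm_sq]
  have hTpos : ∀ v : E, 0 ≤ ⟪v, T v⟫_ℝ := by
    intro v
    rcases eq_or_ne v 0 with rfl | hv0
    · simp
    · have hnv : 0 < ‖v‖ := norm_pos_iff.mpr hv0
      set w : E := ‖v‖⁻¹ • v with hw
      have hw1 : ‖w‖ = 1 := by
        rw [hw, norm_smul, norm_inv, norm_norm, inv_mul_cancel₀ hnv.ne']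
      have hmle : m ≤ ⟪w, A w⟫_ℝ := csInf_le hbdd ⟨w, hw1, rfl⟩
      have hq : ⟪w, A w⟫_ℝ = ‖v‖⁻¹ ^ 2 * ⟪v, A v⟫_ℝ := temple_smul_quad A _ v
      rw [hTval]
      rw [hq] at hmle
      have h2 : ‖v‖ ^ 2 * (‖v‖⁻¹ ^ 2 * ⟪v, A v⟫_ℝ) = ⟪v, A v⟫_ℝ := by
        field_simp
      nlinarith [mul_le_mul_of_nonneg_left hmle (sq_nonneg ‖v‖), h2, sq_nonneg ‖v‖]
  have hTsym : ∀ x y : E, ⟪T x, y⟫_ℝ = ⟪x, T y⟫_ℝ := by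
    intro x y
    simp only [hT, ContinuousLinearMap.sub_apply, ContinuousLinearMap.smul_apply,
      ContinuousLinearMap.one_apply, inner_sub_left, inner_sub_right,
      real_inner_smul_left, real_inner_smul_right, hsym x y]
  obtain ⟨U, hU⟩ := hTunit
  set C : ℝ := ‖((U⁻¹ : (E →L[ℝ] E)ˣ) : E →L[ℝ] E)‖ with hC
  have hCinv : ∀ v : E, ‖v‖ ≤ C * ‖T v‖ := by
    intro v
    have h1 : ((U⁻¹ : (E →L[ℝ] E)ˣ) : E →L[ℝ] E) (T v) = v := by
      rw [← hU]
      have h2 : ((U⁻¹ : (E →L[ℝ] E)ˣ) : E →L[ℝ] E) * (U : E →L[ℝ] E) = 1 := U.inv_mul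
      calc ((U⁻¹ : (E →L[ℝ] E)ˣ) : E →L[ℝ] E) ((U : E →L[ℝ] E) v)
          = (((U⁻¹ : (E →L[ℝ] E)ˣ) : E →L[ℝ] E) * (U : E →L[ℝ] E)) v := rfl
        _ = v := by rw [h2]; rfl
    calc ‖v‖ = ‖((U⁻¹ : (E →L[ℝ] E)ˣ) : E →L[ℝ] E) (T v)‖ := by rw [h1]
      _ ≤ C * ‖T v‖ := ContinuousLinearMap.le_opNorm _ _
  have hC0 : 0 < C := by
    have h1 := hCinv ψ
    rw [hψ] at h1
    nlinarith [norm_nonneg (T ψ), norm_nonneg ((U⁻¹ : (E →L[ℝ] E)ˣ) : E →L[ℝ] E)]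
  set ε : ℝ := (C ^ 2 * ‖T‖ + 1)⁻¹ with hε
  have hεpos : 0 < ε := by
    have : (0:ℝ) < C ^ 2 * ‖T‖ + 1 := by positivity
    positivity
  obtain ⟨r, hrS, hrlt⟩ := Real.lt_sInf_add_pos hne hεpos
  obtain ⟨v, hv1, rfl⟩ := hrS
  have h1 : ⟪v, T v⟫_ℝ < ε := by
    rw [hTval, hv1]
    rw [← hm] at hrlt
    nlinarith [hrlt]
  have h2 : ‖T v‖ ^ 2 ≤ ‖T‖ * ⟪v, T v⟫_ℝ := temple_pos_op_sq T hTsym hTpos v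
  have h3 : 1 ≤ C ^ 2 * ‖T v‖ ^ 2 := by
    have := hCinv v
    rw [hv1] at this
    nlinarith [norm_nonneg (T v), hC0.le]
  have h4 : C ^ 2 * ‖T v‖ ^ 2 ≤ C ^ 2 * (‖T‖ * ⟪v, T v⟫_ℝ) :=
    mul_le_mul_of_nonneg_left h2 (sq_nonneg C)
  have h6 : C ^ 2 * ‖T‖ * ⟪v, T v⟫_ℝ ≤ C ^ 2 * ‖T‖ * ε := by
    have hnn : (0:ℝ) ≤ C ^ 2 * ‖T‖ := by positivity
    exact mul_le_mul_of_nonneg_left h1.le hnn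
  have hεeq : ε * (C ^ 2 * ‖T‖ + 1) = 1 := by
    rw [hε]
    field_simp
  nlinarith [h3, h4, h6, hεpos, hεeq]

end Aux2


set_option maxHeartbeats 2000000 in
/-- If `ψ` is a normalized ground state of `H` with eigenvalue `E₀`, `W ≥ 0` is bounded
self-adjoint with `‖W‖ ≤ (E₁-E₀)/3`, then
`⟨ψ,(H+W)ψ⟩ - E₁(H+W) ≤ -2(E₁-E₀)/3 < 0` and, by Temple's inequality,
`E₀(H+W) ≥ E₀ + ⟨ψ,Wψ⟩ - 3/(E₁-E₀)·⟨Wψ,Wψ⟩`. -/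
theorem temple_lower_bound_perturbation {E : Type*} [NormedAddCommGroup E]
    [InnerProductSpace ℝ E] [CompleteSpace E] (H W : E →L[ℝ] E)
    (hH : IsSelfAdjoint H) (hW : IsSelfAdjoint W) (hWpos : ∀ v : E, 0 ≤ ⟪v, W v⟫_ℝ)
    (E₀ E₁ : ℝ) (hE₀ : E₀ = sInf (spectrum ℝ H)) (hE₁ : E₁ = secondMinMax H)
    (hE₀₁ : E₀ < E₁) (ψ : E) (hψ : ‖ψ‖ = 1) (heig : H ψ = E₀ • ψ)
    (hWnorm : ‖W‖ ≤ (E₁ - E₀) / 3) :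
    ⟪ψ, (H + W) ψ⟫_ℝ - secondMinMax (H + W) ≤ -(2 * (E₁ - E₀) / 3) ∧
      -(2 * (E₁ - E₀) / 3) < 0 ∧
      sInf (spectrum ℝ (H + W)) ≥ E₀ + ⟪ψ, W ψ⟫_ℝ - 3 / (E₁ - E₀) * ⟪W ψ, W ψ⟫_ℝ := by
  have hHsym : ∀ x y : E, ⟪H x, y⟫_ℝ = ⟪x, H y⟫_ℝ := fun x y =>
    (ContinuousLinearMap.isSelfAdjoint_iff_isSymmetric.mp hH) x y
  have hWsym : ∀ x y : E, ⟪W x, y⟫_ℝ = ⟪x, W y⟫_ℝ := fun x y =>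
    (ContinuousLinearMap.isSelfAdjoint_iff_isSymmetric.mp hW) x y
  have hAsym : ∀ x y : E, ⟪(H + W) x, y⟫_ℝ = ⟪x, (H + W) y⟫_ℝ := fun x y =>
    (ContinuousLinearMap.isSelfAdjoint_iff_isSymmetric.mp (hH.add hW)) x y
  set s : ℝ := ⟪ψ, W ψ⟫_ℝ with hs
  have hs0 : 0 ≤ s := hWpos ψ
  have hsle : s ≤ (E₁ - E₀) / 3 := by
    have h1 : s ≤ ‖ψ‖ * ‖W ψ‖ := real_inner_le_norm ψ (W ψ)
    have h2 : ‖W ψ‖ ≤ ‖W‖ * ‖ψ‖ := W.le_opNorm ψ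
    rw [hψ] at h1 h2
    simp only [one_mul, mul_one] at h1 h2
    linarith
  have hqψ : ⟪ψ, H ψ⟫_ℝ = E₀ := by
    rw [heig, real_inner_smul_right, real_inner_self_eq_norm_sq, hψ]; ring
  have hqA : ⟪ψ, (H + W) ψ⟫_ℝ = E₀ + s := by
    rw [ContinuousLinearMap.add_apply, inner_add_right, hqψ]
  have hgap : 0 < E₁ - E₀ := by linarith
  -- Rayleigh quotients orthogonal to the ground state are at least E₁
  have hE1low : ∀ u : E, ⟪ψ, u⟫_ℝ = 0 → E₁ * ‖u‖ ^ 2 ≤ ⟪u, H u⟫_ℝ := by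
    intro u hu
    rcases eq_or_ne u 0 with rfl | hu0
    · simp
    · have hnu : 0 < ‖u‖ := norm_pos_iff.mpr hu0
      set w : E := ‖u‖⁻¹ • u with hw
      have hw1 : ‖w‖ = 1 := by
        rw [hw, norm_smul, norm_inv, norm_norm, inv_mul_cancel₀ hnu.ne']
      have how : ⟪ψ, w⟫_ℝ = 0 := by rw [hw, real_inner_smul_right, hu, mul_zero]
      have hble := temple_secondMinMax_le_max H hHsym E₀ ψ hψ heig w hw1 how
      rw [← hE₁] at hble
      have hE1w : E₁ ≤ ⟪w, H w⟫_ℝ := by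
        rcases le_or_gt E₁ ⟪w, H w⟫_ℝ with h | h
        · exact h
        · have : max E₀ ⟪w, H w⟫_ℝ < E₁ := max_lt hE₀₁ h
          linarith
      have hq : ⟪w, H w⟫_ℝ = ‖u‖⁻¹ ^ 2 * ⟪u, H u⟫_ℝ := temple_smul_quad H _ u
      rw [hq] at hE1w
      have h2 : ‖u‖ ^ 2 * (‖u‖⁻¹ ^ 2 * ⟪u, H u⟫_ℝ) = ⟪u, H u⟫_ℝ := by field_simp
      have h3 := mul_le_mul_of_nonneg_left hE1w (sq_nonneg ‖u‖)
      rw [h2] at h3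
      linarith only [h3]
  have hmono := temple_secondMinMax_mono H W hWpos
  have hE1A : E₁ ≤ secondMinMax (H + W) := le_trans (le_of_eq hE₁) hmono
  refine ⟨?_, by linarith, ?_⟩
  · rw [hqA]; linarith
  -- Temple's inequality
  set m : ℝ := ‖W ψ‖ with hmdef
  have hm0 : 0 ≤ m := norm_nonneg _
  have hWψ : ⟪W ψ, W ψ⟫_ℝ = m ^ 2 := real_inner_self_eq_norm_sq _
  set k : ℝ := 3 / (E₁ - E₀) * m ^ 2 with hk
  set R : ℝ := E₀ + s - k with hR
  have hk0 : 0 ≤ k := by positivity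
  set g : ℝ := E₁ - E₀ - s with hgdef
  have hg : 2 * (E₁ - E₀) / 3 ≤ g := by rw [hgdef]; linarith
  have hg0 : 0 < g := by linarith
  clear_value s m k R g
  have hgk : 2 * m ^ 2 ≤ g * k := by
    have h1 : k * (2 * (E₁ - E₀) / 3) = 2 * m ^ 2 := by
      rw [hk]; field_simp
    have h2 := mul_le_mul_of_nonneg_left hg hk0
    nlinarith only [h1, h2, hk0, hg]
  have qlow : ∀ v : E, R * ‖v‖ ^ 2 ≤ ⟪v, (H + W) v⟫_ℝ := by
    intro v
    set a : ℝ := ⟪ψ, v⟫_ℝ with ha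
    set u : E := v - a • ψ with hu
    have huψ : ⟪ψ, u⟫_ℝ = 0 := by
      rw [hu, inner_sub_right, real_inner_smul_right, real_inner_self_eq_norm_sq, hψ]
      ring
    have huψ' : ⟪u, ψ⟫_ℝ = 0 := by rw [real_inner_comm]; exact huψ
    have hv : v = a • ψ + u := by rw [hu]; abel
    have hnorm : ‖v‖ ^ 2 = a ^ 2 + ‖u‖ ^ 2 := by
      conv_lhs => rw [hv]
      rw [norm_add_sq_real, real_inner_smul_left, huψ, norm_smul, hψ, Real.norm_eq_abs]
      rw [mul_pow, sq_abs]
      ring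
    set c : ℝ := ⟪u, W ψ⟫_ℝ with hc
    have hcabs : |c| ≤ ‖u‖ * m := by
      calc |c| ≤ ‖u‖ * ‖W ψ‖ := abs_real_inner_le_norm _ _
        _ = ‖u‖ * m := by rw [hmdef]
    have hcr1 : ⟪ψ, H u⟫_ℝ = 0 := by
      rw [← hHsym, heig, real_inner_smul_left, huψ]; ring
    have hcr2 : ⟪u, H ψ⟫_ℝ = 0 := by
      rw [heig, real_inner_smul_right, huψ']; ring
    have hcr3 : ⟪ψ, W u⟫_ℝ = c := by
      rw [← hWsym, real_inner_comm]
    have hexp : ⟪v, (H + W) v⟫_ℝ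
        = a ^ 2 * (E₀ + s) + 2 * (a * c) + ⟪u, H u⟫_ℝ + ⟪u, W u⟫_ℝ := by
      conv_lhs => rw [hv]
      simp only [ContinuousLinearMap.add_apply, map_add, map_smul, inner_add_left,
        inner_add_right, real_inner_smul_left, real_inner_smul_right,
        hqψ, hcr1, hcr2, hcr3, ← hs, ← hc]
      ring
    clear_value a u c
    rw [hexp, hnorm]
    have hHu := hE1low u huψ
    have hWu := hWpos u
    have hac : -(|a| * (‖u‖ * m)) ≤ a * c := by
      have h1 : |a * c| ≤ |a| * (‖u‖ * m) := by
        rw [abs_mul]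
        exact mul_le_mul_of_nonneg_left hcabs (abs_nonneg a)
      linarith [neg_abs_le (a * c)]
    have p1 := mul_le_mul_of_nonneg_left hac hg0.le
    have p2 := mul_le_mul_of_nonneg_right hgk (sq_nonneg a)
    have e1 : (0:ℝ) ≤ (g * ‖u‖ - |a| * m) ^ 2 := sq_nonneg _
    have e2 : |a| ^ 2 * m ^ 2 = a ^ 2 * m ^ 2 := by rw [sq_abs]
    have hgkey : 0 ≤ g * (k * a ^ 2 + 2 * (a * c) + g * ‖u‖ ^ 2) := by
      nlinarith only [e1, e2, p1, p2, sq_nonneg (a * m)]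
    have key : 0 ≤ k * a ^ 2 + 2 * (a * c) + g * ‖u‖ ^ 2 := by
      nlinarith only [hgkey, hg0]
    have hE1g : E₁ = E₀ + s + g := by rw [hgdef]; ring
    have hkb : 0 ≤ k * ‖u‖ ^ 2 := mul_nonneg hk0 (sq_nonneg _)
    have hiden : a ^ 2 * (E₀ + s) + 2 * (a * c) + E₁ * ‖u‖ ^ 2 - R * (a ^ 2 + ‖u‖ ^ 2)
        = k * a ^ 2 + 2 * (a * c) + g * ‖u‖ ^ 2 + k * ‖u‖ ^ 2 := by
      rw [hR, hE1g]; ring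
    linarith only [key, hkb, hiden, hHu, hWu]
  have hspec := temple_inf_mem_spectrum (H + W) hAsym ψ hψ
  have hRgoal : E₀ + s - 3 / (E₁ - E₀) * ⟪W ψ, W ψ⟫_ℝ = R := by
    rw [hWψ, hR, hk]
  rw [ge_iff_le, hRgoal]
  refine le_csInf ⟨_, hspec⟩ fun y hy => ?_
  by_contra hlt
  push_neg at hlt
  exact temple_not_mem_spectrum (H + W) R y hlt qlow hy
end

section
/- Let H be a self-adjoint operator bounded below with spectrum σ(H), and W ≥ 0 a nonnegative bounded self-adjoint operator such that ⟨Wψ, Wψ⟩ ≤ κ ⟨ψ, Wψ⟩ for a normalized ground state ψ of H with Hψ = E₀ψ, where E₀ = inf σ(H). Assume E₁(H) - E₀ ≥ δ > 0 and κ ≤ δ/2. Then E₀(H + W) ≥ E₀ + (1/2)⟨ψ, Wψ⟩. -/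
open scoped InnerProductSpace

section Helpers
variable {E : Type*} [NormedAddCommGroup E] [InnerProductSpace ℝ E] [CompleteSpace E]

/-- Cauchy–Schwarz for the semidefinite form of a positive symmetric operator. -/
lemma cs_pos_form (W : E →L[ℝ] E) (hW : IsSelfAdjoint W)
    (hWpos : ∀ v : E, 0 ≤ ⟪v, W v⟫_ℝ) (x y : E) :
    ⟪x, W y⟫_ℝ ^ 2 ≤ ⟪x, W x⟫_ℝ * ⟪y, W y⟫_ℝ := by
  have hsym : ∀ a b : E, ⟪W a, b⟫_ℝ = ⟪a, W b⟫_ℝ := fun a b => hW.isSymmetric a b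
  have key : ∀ s : ℝ, 0 ≤ ⟪y, W y⟫_ℝ * (s * s) + (2 * ⟪x, W y⟫_ℝ) * s + ⟪x, W x⟫_ℝ := by
    intro s
    have h := hWpos (x + s • y)
    have hexp : ⟪x + s • y, W (x + s • y)⟫_ℝ
        = ⟪y, W y⟫_ℝ * (s * s) + (2 * ⟪x, W y⟫_ℝ) * s + ⟪x, W x⟫_ℝ := by
      have h1 : ⟪y, W x⟫_ℝ = ⟪x, W y⟫_ℝ := by rw [← hsym y x, real_inner_comm]
      simp [inner_add_left, inner_add_right, real_inner_smul_left, real_inner_smul_right,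
        map_add, map_smul, h1]
      ring
    linarith [hexp ▸ h]
  have hd := discrim_le_zero key
  rw [discrim] at hd
  nlinarith

/-- A coercivity lower bound on the quadratic form bounds the spectrum from below. -/
lemma spectrum_lb (A : E →L[ℝ] E) {c : ℝ}
    (h : ∀ v : E, c * ‖v‖ ^ 2 ≤ ⟪v, A v⟫_ℝ) {μ : ℝ} (hμ : μ ∈ spectrum ℝ A) : c ≤ μ := by
  by_contra hlt
  push_neg at hlt
  apply spectrum.notMem_iff.mpr _ hμ
  have hcpos : (0 : ℝ) < c - μ := by linarith
  refine ContinuousLinearMap.isUnit_of_forall_le_norm_inner_map _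
    (c := (c - μ).toNNReal) (Real.toNNReal_pos.mpr hcpos) (fun x => ?_)
  have happ : (algebraMap ℝ (E →L[ℝ] E) μ - A) x = μ • x - A x := by
    simp [Algebra.algebraMap_eq_smul_one]
  rw [happ, Real.coe_toNNReal _ hcpos.le]
  have h1 : ⟪μ • x - A x, x⟫_ℝ = μ * ‖x‖ ^ 2 - ⟪x, A x⟫_ℝ := by
    rw [inner_sub_left, real_inner_smul_left, real_inner_self_eq_norm_sq, real_inner_comm]
  have h2 : ⟪μ • x - A x, x⟫_ℝ ≤ -((c - μ) * ‖x‖ ^ 2) := by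
    have := h x; rw [h1]; nlinarith
  have h3 : (c - μ) * ‖x‖ ^ 2 ≤ |⟪μ • x - A x, x⟫_ℝ| := by
    calc (c - μ) * ‖x‖ ^ 2 ≤ -⟪μ • x - A x, x⟫_ℝ := by linarith
    _ ≤ |⟪μ • x - A x, x⟫_ℝ| := neg_le_abs _
  calc ‖x‖ ^ 2 * (c - μ) = (c - μ) * ‖x‖ ^ 2 := by ring
  _ ≤ |⟪μ • x - A x, x⟫_ℝ| := h3
  _ = ‖⟪μ • x - A x, x⟫_ℝ‖ := (Real.norm_eq_abs _).symm

/-- For a self-adjoint operator on a nontrivial real Hilbert space, the infimum of the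
Rayleigh quotient over the unit sphere belongs to the spectrum. -/
lemma bottom_mem_spectrum (A : E →L[ℝ] E) (hA : IsSelfAdjoint A)
    (x₀ : E) (hx₀ : ‖x₀‖ = 1) :
    (⨅ φ : {φ : E // ‖φ‖ = 1}, ⟪(φ : E), A φ⟫_ℝ) ∈ spectrum ℝ A := by
  haveI : Nonempty {φ : E // ‖φ‖ = 1} := ⟨⟨x₀, hx₀⟩⟩
  set m := ⨅ φ : {φ : E // ‖φ‖ = 1}, ⟪(φ : E), A φ⟫_ℝ with hm
  have hbdd : BddBelow (Set.range fun φ : {φ : E // ‖φ‖ = 1} => ⟪(φ : E), A φ⟫_ℝ) := by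
    refine ⟨-‖A‖, ?_⟩
    rintro _ ⟨⟨φ, hφ⟩, rfl⟩
    have h1 : |⟪φ, A φ⟫_ℝ| ≤ ‖A‖ := by
      calc |⟪φ, A φ⟫_ℝ| ≤ ‖φ‖ * ‖A φ‖ := abs_real_inner_le_norm _ _
      _ ≤ ‖φ‖ * (‖A‖ * ‖φ‖) := by
          exact mul_le_mul_of_nonneg_left (A.le_opNorm φ) (norm_nonneg _)
      _ = ‖A‖ := by rw [hφ]; ring
    simpa using neg_le_of_abs_le h1
  -- positivity of B = A - m•1
  set B : E →L[ℝ] E := A - m • (1 : E →L[ℝ] E) with hB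
  have hBapp : ∀ v, B v = A v - m • v := by intro v; simp [hB]
  have hBpos : ∀ v : E, 0 ≤ ⟪v, B v⟫_ℝ := by
    intro v
    rcases eq_or_ne v 0 with rfl | hv
    · simp
    · have hnv : (0 : ℝ) < ‖v‖ := norm_pos_iff.mpr hv
      have hunit : ‖(‖v‖⁻¹ • v)‖ = 1 := norm_smul_inv_norm hv
      have hle : m ≤ ⟪(‖v‖⁻¹ • v), A (‖v‖⁻¹ • v)⟫_ℝ := ciInf_le hbdd ⟨‖v‖⁻¹ • v, hunit⟩
      have hval : ⟪(‖v‖⁻¹ • v), A (‖v‖⁻¹ • v)⟫_ℝ = ‖v‖⁻¹ * (‖v‖⁻¹ * ⟪v, A v⟫_ℝ) := by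
        simp [real_inner_smul_left, real_inner_smul_right, map_smul]
      have hiv : ⟪v, B v⟫_ℝ = ⟪v, A v⟫_ℝ - m * ‖v‖ ^ 2 := by
        rw [hBapp, inner_sub_right, real_inner_smul_right, real_inner_self_eq_norm_sq]
      rw [hiv]
      rw [hval] at hle
      have h2 : m * ‖v‖ ^ 2 ≤ ⟪v, A v⟫_ℝ := by
        have h3 := mul_le_mul_of_nonneg_left hle (le_of_lt (mul_pos hnv hnv))
        have : ‖v‖ * ‖v‖ * (‖v‖⁻¹ * (‖v‖⁻¹ * ⟪v, A v⟫_ℝ)) = ⟪v, A v⟫_ℝ := by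
          field_simp
        nlinarith [this ▸ h3]
      linarith
  have hBsa : IsSelfAdjoint B := by
    refine hA.sub ?_
    exact (IsSelfAdjoint.all m).smul (IsSelfAdjoint.one _)
  -- key norm bound:  ‖Bv‖² ≤ ‖B‖ ⟪v, Bv⟫
  have hkey : ∀ v : E, ‖B v‖ ^ 2 ≤ ‖B‖ * ⟪v, B v⟫_ℝ := by
    intro v
    have hcs := cs_pos_form B hBsa hBpos (B v) v
    have h1 : ⟪B v, B (B v)⟫_ℝ ≤ ‖B v‖ * (‖B‖ * ‖B v‖) := by
      calc ⟪B v, B (B v)⟫_ℝ ≤ ‖B v‖ * ‖B (B v)‖ := real_inner_le_norm _ _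
      _ ≤ ‖B v‖ * (‖B‖ * ‖B v‖) :=
          mul_le_mul_of_nonneg_left (B.le_opNorm _) (norm_nonneg _)
    have h2 : ⟪B v, B v⟫_ℝ = ‖B v‖ ^ 2 := real_inner_self_eq_norm_sq _
    rcases eq_or_lt_of_le (norm_nonneg (B v)) with h0 | h0
    · rw [← h0]
      simpa using mul_nonneg (norm_nonneg B) (hBpos v)
    · have h3 : (‖B v‖ ^ 2) ^ 2 ≤ ‖B v‖ * (‖B‖ * ‖B v‖) * ⟪v, B v⟫_ℝ := by
        calc (‖B v‖ ^ 2) ^ 2 = ⟪B v, B v⟫_ℝ ^ 2 := by rw [h2]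
        _ ≤ ⟪B v, B (B v)⟫_ℝ * ⟪v, B v⟫_ℝ := hcs
        _ ≤ ‖B v‖ * (‖B‖ * ‖B v‖) * ⟪v, B v⟫_ℝ :=
            mul_le_mul_of_nonneg_right h1 (hBpos v)
      nlinarith [hBpos v, h0, mul_pos h0 h0]
  -- suppose m ∉ spectrum
  by_contra hns
  have hunit := spectrum.notMem_iff.mp hns
  set R : E →L[ℝ] E := ↑hunit.unit⁻¹ with hR
  have hinv : ∀ x : E, R ((algebraMap ℝ (E →L[ℝ] E) m - A) x) = x := by
    intro x
    have h5 : (↑hunit.unit⁻¹ : E →L[ℝ] E) ((hunit.unit : E →L[ℝ] E) x) = x := by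
      rw [← ContinuousLinearMap.mul_apply, Units.inv_mul, ContinuousLinearMap.one_apply]
    have h6 : ((hunit.unit : E →L[ℝ] E)) x = (algebraMap ℝ (E →L[ℝ] E) m - A) x :=
      congrArg (fun f : E →L[ℝ] E => f x) hunit.unit_spec
    rw [hR, ← h6, h5]
  have hTB : ∀ x : E, (algebraMap ℝ (E →L[ℝ] E) m - A) x = -(B x) := by
    intro x; rw [hBapp]; simp [Algebra.algebraMap_eq_smul_one]
  -- approximate minimizers
  have hRB : ∀ x : E, ‖x‖ ≤ ‖R‖ * ‖B x‖ := by
    intro x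
    calc ‖x‖ = ‖R ((algebraMap ℝ (E →L[ℝ] E) m - A) x)‖ := by rw [hinv]
    _ ≤ ‖R‖ * ‖(algebraMap ℝ (E →L[ℝ] E) m - A) x‖ := R.le_opNorm _
    _ = ‖R‖ * ‖B x‖ := by rw [hTB]; rw [norm_neg]
  set ε : ℝ := 1 / (2 * (‖R‖ ^ 2 * ‖B‖ + 1)) with hε
  have hεpos : 0 < ε := by positivity
  obtain ⟨⟨φ, hφ⟩, hφlt⟩ := exists_lt_of_ciInf_lt (show m < m + ε by linarith)
  have hφB : ⟪φ, B φ⟫_ℝ < ε := by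
    have : ⟪φ, B φ⟫_ℝ = ⟪φ, A φ⟫_ℝ - m := by
      rw [hBapp, inner_sub_right, real_inner_smul_right, real_inner_self_eq_norm_sq, hφ]; ring
    rw [this]; simp only at hφlt; linarith
  have h1 : (1 : ℝ) ≤ ‖R‖ * ‖B φ‖ := by have := hRB φ; rwa [hφ] at this
  have h2 : ‖B φ‖ ^ 2 ≤ ‖B‖ * ε := by
    calc ‖B φ‖ ^ 2 ≤ ‖B‖ * ⟪φ, B φ⟫_ℝ := hkey φ
    _ ≤ ‖B‖ * ε := mul_le_mul_of_nonneg_left hφB.le (norm_nonneg _)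
  have h3 : (1 : ℝ) ≤ ‖R‖ ^ 2 * (‖B‖ * ε) := by
    nlinarith [norm_nonneg R, norm_nonneg (B φ)]
  have h4 : ‖R‖ ^ 2 * ‖B‖ * ε < 1 := by
    have hd : (0:ℝ) < 2 * (‖R‖ ^ 2 * ‖B‖ + 1) := by positivity
    have he : ‖R‖ ^ 2 * ‖B‖ * ε = (‖R‖ ^ 2 * ‖B‖) / (2 * (‖R‖ ^ 2 * ‖B‖ + 1)) := by
      rw [hε]; ring
    rw [he, div_lt_iff₀ hd]
    have hnn : (0:ℝ) ≤ ‖R‖ ^ 2 * ‖B‖ := mul_nonneg (sq_nonneg _) (norm_nonneg _)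
    linarith
  nlinarith



lemma gap_bound (H : E →L[ℝ] E) (hH : IsSelfAdjoint H) (E₀ δ : ℝ)
    (ψ : E) (hψ : ‖ψ‖ = 1) (heig : H ψ = E₀ • ψ)
    (hδ : E₀ + δ ≤ secondMinMax H) (hδpos : 0 < δ) :
    ∀ u : E, ⟪u, ψ⟫_ℝ = 0 → (E₀ + δ) * ⟪u, u⟫_ℝ ≤ ⟪u, H u⟫_ℝ := by
  have hψψ : ⟪ψ, ψ⟫_ℝ = 1 := by
    rw [real_inner_self_eq_norm_sq, hψ]; norm_num
  have hψHψ : ⟪ψ, H ψ⟫_ℝ = E₀ := by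
    rw [heig, real_inner_smul_right, hψψ, mul_one]
  have hsym : ∀ a b : E, ⟪H a, b⟫_ℝ = ⟪a, H b⟫_ℝ := fun a b => hH.isSymmetric a b
  -- the unit-vector case
  have hunitcase : ∀ u : E, ‖u‖ = 1 → ⟪u, ψ⟫_ℝ = 0 → E₀ + δ ≤ ⟪u, H u⟫_ℝ := by
    intro u hu huψ
    have hψu : ⟪ψ, u⟫_ℝ = 0 := by rw [real_inner_comm]; exact huψ
    have huHψ : ⟪u, H ψ⟫_ℝ = 0 := by
      rw [heig, real_inner_smul_right, huψ, mul_zero]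
    have hψHu : ⟪ψ, H u⟫_ℝ = 0 := by
      rw [← hsym, heig, real_inner_smul_left, hψu, mul_zero]
    have hstep : ∀ ε : ℝ, 0 < ε → ε < δ → E₀ + δ - ε ≤ ⟪u, H u⟫_ℝ := by
      intro ε hε hεδ
      by_contra hcon
      push_neg at hcon
      have h2 : ¬ secondMinMax H ≤ E₀ + δ - ε := by linarith
      rw [secondMinMax] at h2
      have h3 : ∃ v : E,
          E₀ + δ - ε < ⨅ χ : {χ : E // ‖χ‖ = 1 ∧ ⟪χ, v⟫_ℝ = 0}, ⟪(χ : E), H χ⟫_ℝ := by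
        by_contra hall
        push_neg at hall
        exact h2 (ciSup_le hall)
      obtain ⟨v, hv⟩ := h3
      have hbddv : BddBelow (Set.range
          fun χ : {χ : E // ‖χ‖ = 1 ∧ ⟪χ, v⟫_ℝ = 0} => ⟪(χ : E), H χ⟫_ℝ) := by
        refine ⟨-‖H‖, ?_⟩
        rintro _ ⟨⟨χ, hχ1, _⟩, rfl⟩
        have h1 : |⟪χ, H χ⟫_ℝ| ≤ ‖H‖ := by
          calc |⟪χ, H χ⟫_ℝ| ≤ ‖χ‖ * ‖H χ‖ := abs_real_inner_le_norm _ _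
          _ ≤ ‖χ‖ * (‖H‖ * ‖χ‖) := mul_le_mul_of_nonneg_left (H.le_opNorm χ) (norm_nonneg _)
          _ = ‖H‖ := by rw [hχ1]; ring
        simpa using neg_le_of_abs_le h1
      set α := ⟪u, v⟫_ℝ with hα
      set β := ⟪ψ, v⟫_ℝ with hβ
      by_cases hχ0 : α • ψ - β • u = 0
      · -- then α = β = 0, so ψ ⊥ v
        have hαz : α = 0 := by
          have h4 : ⟪ψ, α • ψ - β • u⟫_ℝ = α := by
            rw [inner_sub_right, real_inner_smul_right, real_inner_smul_right, hψψ, hψu]; ring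
          rw [hχ0, inner_zero_right] at h4; exact h4.symm
        have hβz : β = 0 := by
          have h4 : ⟪u, α • ψ - β • u⟫_ℝ = -β := by
            rw [inner_sub_right, real_inner_smul_right, real_inner_smul_right, huψ,
              real_inner_self_eq_norm_sq, hu]; ring
          rw [hχ0, inner_zero_right] at h4; linarith
        have hle := ciInf_le hbddv ⟨ψ, hψ, hβz⟩
        simp only [hψHψ] at hle
        linarith
      · set χ₀ : E := α • ψ - β • u with hχ₀
        have hn : (0 : ℝ) < ‖χ₀‖ := norm_pos_iff.mpr hχ0
        have hn2 : ‖χ₀‖ ^ 2 = α ^ 2 + β ^ 2 := by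
          rw [← real_inner_self_eq_norm_sq, hχ₀]
          simp only [inner_sub_left, inner_sub_right, real_inner_smul_left,
            real_inner_smul_right, hψψ, hψu, huψ, real_inner_self_eq_norm_sq, hu]
          simp [norm_smul, hψ, hu, mul_pow, sq_abs]
        have hχv : ⟪(‖χ₀‖⁻¹ • χ₀ : E), v⟫_ℝ = 0 := by
          rw [real_inner_smul_left, hχ₀, inner_sub_left, real_inner_smul_left,
            real_inner_smul_left, ← hα, ← hβ]
          ring
        have hχu : ‖(‖χ₀‖⁻¹ • χ₀ : E)‖ = 1 := norm_smul_inv_norm hχ0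
        have hle := ciInf_le hbddv ⟨‖χ₀‖⁻¹ • χ₀, hχu, hχv⟩
        simp only at hle
        have hval : ⟪(‖χ₀‖⁻¹ • χ₀ : E), H (‖χ₀‖⁻¹ • χ₀)⟫_ℝ
            = ‖χ₀‖⁻¹ * (‖χ₀‖⁻¹ * ⟪χ₀, H χ₀⟫_ℝ) := by
          rw [map_smul, real_inner_smul_left, real_inner_smul_right]
        have hexp : ⟪χ₀, H χ₀⟫_ℝ = α ^ 2 * E₀ + β ^ 2 * ⟪u, H u⟫_ℝ := by
          rw [hχ₀]
          simp only [map_sub, map_smul, inner_sub_left, inner_sub_right,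
            real_inner_smul_left, real_inner_smul_right, hψHψ, hψHu, huHψ]
          ring
        rw [hval, hexp] at hle
        have hlt := lt_of_lt_of_le hv hle
        have hmul : (E₀ + δ - ε) * (α ^ 2 + β ^ 2) < α ^ 2 * E₀ + β ^ 2 * ⟪u, H u⟫_ℝ := by
          have h5 := mul_lt_mul_of_pos_left hlt (mul_pos hn hn)
          have h6 : ‖χ₀‖ * ‖χ₀‖ * (‖χ₀‖⁻¹ * (‖χ₀‖⁻¹ * (α ^ 2 * E₀ + β ^ 2 * ⟪u, H u⟫_ℝ)))
              = α ^ 2 * E₀ + β ^ 2 * ⟪u, H u⟫_ℝ := by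
            field_simp
          rw [h6] at h5
          have h7 : ‖χ₀‖ * ‖χ₀‖ = α ^ 2 + β ^ 2 := by rw [← hn2]; ring
          rw [h7] at h5
          calc (E₀ + δ - ε) * (α ^ 2 + β ^ 2) = (α ^ 2 + β ^ 2) * (E₀ + δ - ε) := by ring
          _ < _ := h5
        have fact1 := mul_le_mul_of_nonneg_left hcon.le (sq_nonneg β)
        have fact2 : 0 ≤ α ^ 2 * (δ - ε) := mul_nonneg (sq_nonneg α) (by linarith)
        nlinarith [hmul, fact1, fact2]
    by_contra hcon
    push_neg at hcon
    set R := ⟪u, H u⟫_ℝ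
    have hε1 : (0 : ℝ) < min (δ / 2) ((E₀ + δ - R) / 2) := by
      apply lt_min <;> linarith
    have hε2 : min (δ / 2) ((E₀ + δ - R) / 2) < δ := lt_of_le_of_lt (min_le_left _ _) (by linarith)
    have := hstep _ hε1 hε2
    have := min_le_right (δ / 2) ((E₀ + δ - R) / 2)
    linarith
  intro u huψ
  rcases eq_or_ne u 0 with rfl | hu0
  · simp
  · have hnu : (0 : ℝ) < ‖u‖ := norm_pos_iff.mpr hu0
    have h1 := hunitcase (‖u‖⁻¹ • u) (norm_smul_inv_norm hu0)
      (by rw [real_inner_smul_left, huψ, mul_zero])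
    have h2 : ⟪(‖u‖⁻¹ • u : E), H (‖u‖⁻¹ • u)⟫_ℝ = ‖u‖⁻¹ * (‖u‖⁻¹ * ⟪u, H u⟫_ℝ) := by
      rw [map_smul, real_inner_smul_left, real_inner_smul_right]
    rw [h2] at h1
    have h3 : ⟪u, u⟫_ℝ = ‖u‖ ^ 2 := real_inner_self_eq_norm_sq u
    have h4 := mul_le_mul_of_nonneg_left h1 (le_of_lt (mul_pos hnu hnu))
    have h5 : ‖u‖ * ‖u‖ * (‖u‖⁻¹ * (‖u‖⁻¹ * ⟪u, H u⟫_ℝ)) = ⟪u, H u⟫_ℝ := by field_simp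
    rw [h5] at h4
    rw [h3]
    nlinarith [h4]

end Helpers

set_option maxHeartbeats 1000000 in
/-- If `ψ` is a normalized ground state ... -/

theorem temple_ground_state_shift {E : Type*} [NormedAddCommGroup E]
    [InnerProductSpace ℝ E] [CompleteSpace E] (H W : E →L[ℝ] E)
    (hH : IsSelfAdjoint H) (hW : IsSelfAdjoint W) (hWpos : ∀ v : E, 0 ≤ ⟪v, W v⟫_ℝ)
    (E₀ κ δ : ℝ) (hE₀ : E₀ = sInf (spectrum ℝ H))
    (ψ : E) (hψ : ‖ψ‖ = 1) (heig : H ψ = E₀ • ψ)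
    (hκ : ⟪W ψ, W ψ⟫_ℝ ≤ κ * ⟪ψ, W ψ⟫_ℝ)
    (hδ : δ ≤ secondMinMax H - E₀) (hδpos : 0 < δ) (hκδ : κ ≤ δ / 2) :
    sInf (spectrum ℝ (H + W)) ≥ E₀ + (1 / 2) * ⟪ψ, W ψ⟫_ℝ := by
  set w := ⟪ψ, W ψ⟫_ℝ with hw
  clear_value w
  have hw0 : 0 ≤ w := by rw [hw]; exact hWpos ψ
  have hψψ : ⟪ψ, ψ⟫_ℝ = 1 := by rw [real_inner_self_eq_norm_sq, hψ]; norm_num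
  have hgap := gap_bound H hH E₀ δ ψ hψ heig (by linarith) hδpos
  have hWsym : ∀ a b : E, ⟪W a, b⟫_ℝ = ⟪a, W b⟫_ℝ := fun a b => hW.isSymmetric a b
  have hHsym : ∀ a b : E, ⟪H a, b⟫_ℝ = ⟪a, H b⟫_ℝ := fun a b => hH.isSymmetric a b
  have hform : ∀ φ : E, (E₀ + 1 / 2 * w) * ‖φ‖ ^ 2 ≤ ⟪φ, (H + W) φ⟫_ℝ := by
    intro φ
    set a := ⟪ψ, φ⟫_ℝ with ha
    set u := φ - a • ψ with hu
    set t := ⟪u, u⟫_ℝ with htdef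
    set c := ⟪u, W ψ⟫_ℝ with hc
    set q := ⟪u, W u⟫_ℝ with hqdef
    clear_value q c t u a
    have huψ : ⟪u, ψ⟫_ℝ = 0 := by
      rw [hu, inner_sub_left, real_inner_smul_left, hψψ, mul_one]
      have h9 := real_inner_comm φ ψ
      linarith [ha, h9]
    have hψu : ⟪ψ, u⟫_ℝ = 0 := by rw [real_inner_comm]; exact huψ
    have hφ : φ = a • ψ + u := by rw [hu]; abel
    have ht : 0 ≤ t := htdef ▸ real_inner_self_nonneg
    have hnφ : ‖φ‖ ^ 2 = a ^ 2 + t := by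
      rw [← real_inner_self_eq_norm_sq, hφ]
      simp only [inner_add_left, inner_add_right, real_inner_smul_left, real_inner_smul_right,
        hψψ, hψu, huψ]
      rw [← htdef]
      ring
    have hψHψ : ⟪ψ, H ψ⟫_ℝ = E₀ := by rw [heig, real_inner_smul_right, hψψ, mul_one]
    have huHψ : ⟪u, H ψ⟫_ℝ = 0 := by rw [heig, real_inner_smul_right, huψ, mul_zero]
    have hψHu : ⟪ψ, H u⟫_ℝ = 0 := by
      rw [← hHsym, heig, real_inner_smul_left, hψu, mul_zero]
    have hHpart : ⟪φ, H φ⟫_ℝ = a ^ 2 * E₀ + ⟪u, H u⟫_ℝ := by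
      rw [hφ]
      simp only [map_add, map_smul, inner_add_left, inner_add_right, real_inner_smul_left,
        real_inner_smul_right, hψHψ, hψHu, huHψ]
      ring
    have hq : 0 ≤ q := hqdef ▸ hWpos u
    have hψWu : ⟪ψ, W u⟫_ℝ = c := by rw [← hWsym, real_inner_comm, hc]
    have hWpart : ⟪φ, W φ⟫_ℝ = a ^ 2 * w + 2 * a * c + q := by
      rw [hφ]
      simp only [map_add, map_smul, inner_add_left, inner_add_right, real_inner_smul_left,
        real_inner_smul_right, hψWu]
      rw [← hw, ← hc, ← hqdef]
      ring
    have hc1 : c ^ 2 ≤ q * w := by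
      have := cs_pos_form W hW hWpos u ψ
      rw [← hc, ← hqdef, ← hw] at this
      exact this
    have hc2 : c ^ 2 ≤ t * (κ * w) := by
      have h1 := real_inner_mul_inner_self_le u (W ψ)
      rw [← hc, ← htdef] at h1
      have h2 : t * ⟪W ψ, W ψ⟫_ℝ ≤ t * (κ * w) := mul_le_mul_of_nonneg_left hκ ht
      nlinarith
    have hHu : (E₀ + δ) * t ≤ ⟪u, H u⟫_ℝ := by rw [htdef]; exact hgap u huψ
    have htotal : ⟪φ, (H + W) φ⟫_ℝ = ⟪φ, H φ⟫_ℝ + ⟪φ, W φ⟫_ℝ := by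
      rw [ContinuousLinearMap.add_apply, inner_add_right]
    rw [htotal, hHpart, hWpart, hnφ]
    rcases eq_or_lt_of_le hw0 with hw0' | hwpos
    · have hc0 : c = 0 := by nlinarith [sq_nonneg c, hc1]
      rw [← hw0', hc0]
      nlinarith [hHu, mul_nonneg hδpos.le ht, hq]
    · have hwκ : w ≤ κ := by
        have h1 := real_inner_mul_inner_self_le ψ (W ψ)
        rw [← hw, hψψ, one_mul] at h1
        nlinarith [hκ]
      have hmw : w * (1 / 2 * w * (a ^ 2 + t)) ≤ w * (δ * t + a ^ 2 * w + 2 * a * c + q) := by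
        nlinarith [sq_nonneg (w * a + 2 * c), hc1, hc2, hq,
          mul_nonneg (mul_nonneg ht hw0) (show (0:ℝ) ≤ δ - κ - w / 2 by linarith)]
      have hmain : 1 / 2 * w * (a ^ 2 + t) ≤ δ * t + a ^ 2 * w + 2 * a * c + q :=
        (mul_le_mul_iff_right₀ hwpos).mp hmw
      linarith [hHu, hmain]
  have hspecne : (spectrum ℝ (H + W)).Nonempty :=
    ⟨_, bottom_mem_spectrum (H + W) (hH.add hW) ψ hψ⟩
  rw [ge_iff_le]
  refine le_csInf hspecne ?_
  intro b hb
  exact spectrum_lb (H + W) (fun v => hform v) hb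
end
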